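/- Let G be the time-invariant dynamic Bayesian network DAG of the environment. If the latent component g_{i,t} has no directed path in G to any future reward node r_{t+k} (k > 0), then the set g_t^min ∪ {a_t} d-separates g_{i,t} from every future reward node r_{t+k} (k > 0) in G, where g_{i,t} ∈ g_t^min if and only if c_i^{g→r} = 1 or g_{i,t} has a directed path in G to a future reward r_{t+k} (for some k > 0) passing through other latent state components. -/

import Mathlib

open Relation

/-- Nodes of the time-invariant dynamic Bayesian network: latent state
components `g_{i,t}`, actions `a_t`, and rewards `r_t`. -/
inductive DBNNode (d : ℕ) : Type where
  | latent (i : Fin d) (t : ℕ)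
  | action (t : ℕ)
  | reward (t : ℕ)
deriving DecidableEq

/-- The fixed binary structural masks of the DBN.  `cgg i j = true` encodes the
edge `g_{j,t-1} → g_{i,t}`, `cag i` the edge `a_{t-1} → g_{i,t}`, `cgr i` the
edge `g_{i,t-1} → r_t`, and `car` the edge `a_{t-1} → r_t`. -/
structure DBNMasks (d : ℕ) where
  cgg : Fin d → Fin d → Bool
  cag : Fin d → Bool
  cgr : Fin d → Bool
  car : Bool

/-- The directed edges of the time-invariant DBN graph `G`. -/
def DBNEdge {d : ℕ} (c : DBNMasks d) : DBNNode d → DBNNode d → Prop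
  | .latent j t, .latent i t' => t' = t + 1 ∧ c.cgg i j = true
  | .action t, .latent i t' => t' = t + 1 ∧ c.cag i = true
  | .latent i t, .reward t' => t' = t + 1 ∧ c.cgr i = true
  | .action t, .reward t' => t' = t + 1 ∧ c.car = true
  | _, _ => False

/-- Undirected adjacency induced by a directed edge relation. -/
def Adj {V : Type*} (E : V → V → Prop) (x y : V) : Prop := E x y ∨ E y x

/-- `p` is a (simple, undirected) path in the graph with edge relation `E`:
consecutive nodes are adjacent and no node repeats. -/
def IsPathList {V : Type*} (E : V → V → Prop) (p : List V) : Prop :=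
  p.Chain' (Adj E) ∧ p.Nodup

/-- A path `p` is blocked by the conditioning set `Z`: it contains a
chain `u → m → v` (in either direction) or a fork `u ← m → v` with middle
node `m ∈ Z`, or a collider `u → m ← v` with `m ∉ Z` and no descendant of
`m` in `Z`. -/
def BlockedBy {V : Type*} (E : V → V → Prop) (Z : Set V) (p : List V) : Prop :=
  ∃ u m v : V, [u, m, v] <:+: p ∧
    ((((E u m ∧ E m v) ∨ (E v m ∧ E m u) ∨ (E m u ∧ E m v)) ∧ m ∈ Z) ∨
      ((E u m ∧ E v m) ∧ m ∉ Z ∧ ∀ w : V, Relation.TransGen E m w → w ∉ Z))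

/-- `Z` d-separates `X` from `Y` in the graph with edge relation `E`: every
path between a node of `X` and a node of `Y` is blocked by `Z`. -/
def DSep {V : Type*} (E : V → V → Prop) (X Y Z : Set V) : Prop :=
  ∀ x ∈ X, ∀ y ∈ Y, ∀ p : List V,
    IsPathList E p → p.head? = some x → p.getLast? = some y → BlockedBy E Z p

/-- The joint distribution (represented abstractly by its ternary conditional
independence relation `CI X Y Z`, "X ⫫ Y given Z") satisfies the global Markov
condition w.r.t. the graph: d-separation implies conditional independence. -/
def GlobalMarkov {V : Type*} (E : V → V → Prop)
    (CI : Set V → Set V → Set V → Prop) : Prop :=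
  ∀ X Y Z : Set V, Disjoint X Y → Disjoint X Z → Disjoint Y Z →
    DSep E X Y Z → CI X Y Z

/-- The joint distribution is faithful to the graph: every conditional
independence corresponds to a d-separation. -/
def FaithfulTo {V : Type*} (E : V → V → Prop)
    (CI : Set V → Set V → Set V → Prop) : Prop :=
  ∀ X Y Z : Set V, Disjoint X Y → Disjoint X Z → Disjoint Y Z →
    CI X Y Z → DSep E X Y Z

/-- `g_{i,t} ∈ g_t^min` iff `c_i^{g→r} = 1` or `g_{i,t}` has a directed path in
`G` to a future reward `r_{t+k}` (some `k > 0`) passing through other latent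
state components. -/
def InMinSet {d : ℕ} (c : DBNMasks d) (i : Fin d) (t : ℕ) : Prop :=
  c.cgr i = true ∨
    ∃ k : ℕ, 0 < k ∧ ∃ (j : Fin d) (s : ℕ),
      Relation.TransGen (DBNEdge c) (DBNNode.latent i t) (DBNNode.latent j s) ∧
      Relation.TransGen (DBNEdge c) (DBNNode.latent j s) (DBNNode.reward (t + k))

/-- The minimal latent state set `g_t^min`, as a set of nodes of `G`. -/
def MinSet {d : ℕ} (c : DBNMasks d) (t : ℕ) : Set (DBNNode d) :=
  {n | ∃ i : Fin d, n = DBNNode.latent i t ∧ InMinSet c i t}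

namespace DSepAux

def nodeTime {d : ℕ} : DBNNode d → ℕ
  | .latent _ t => t
  | .action t => t
  | .reward t => t

lemma edge_time {d : ℕ} {c : DBNMasks d} {x y : DBNNode d} (h : DBNEdge c x y) :
    nodeTime y = nodeTime x + 1 := by
  cases x <;> cases y <;> simp_all [DBNEdge, nodeTime]

lemma transGen_time {d : ℕ} {c : DBNMasks d} {x y : DBNNode d}
    (h : Relation.TransGen (DBNEdge c) x y) : nodeTime x < nodeTime y := by
  induction h with
  | single h => simp [edge_time h]
  | tail _ h ih => have := edge_time h; omega

lemma reward_no_edge {d : ℕ} {c : DBNMasks d} {s : ℕ} {y : DBNNode d} :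
    ¬ DBNEdge c (.reward s) y := by cases y <;> simp [DBNEdge]

lemma no_transGen_from_reward {d : ℕ} {c : DBNMasks d} {s : ℕ} {y : DBNNode d}
    (h : Relation.TransGen (DBNEdge c) (.reward s) y) : False := by
  rcases Relation.TransGen.head'_iff.mp h with ⟨b, hb, -⟩
  exact reward_no_edge hb

lemma mem_Z_time {d : ℕ} {c : DBNMasks d} {t : ℕ} {n : DBNNode d}
    (h : n ∈ MinSet c t ∪ {DBNNode.action t}) : nodeTime n = t := by
  rcases h with ⟨j, rfl, -⟩ | h
  · rfl
  · rw [Set.mem_singleton_iff.mp h]; rfl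

lemma latent_mem_minset {d : ℕ} {c : DBNMasks d} {j : Fin d} {t k : ℕ} (hk : 0 < k)
    (h : Relation.TransGen (DBNEdge c) (.latent j t) (.reward (t + k))) :
    InMinSet c j t := by
  rcases Relation.TransGen.head'_iff.mp h with ⟨b, hb, hbr⟩
  rcases Relation.reflTransGen_iff_eq_or_transGen.mp hbr with rfl | htg
  · exact Or.inl hb.2
  · cases b with
    | latent j' s' => exact Or.inr ⟨k, hk, j', s', .single hb, htg⟩
    | action s' => exact absurd hb (by simp [DBNEdge])
    | reward s' => exact (no_transGen_from_reward htg).elim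

lemma mem_Z_of_transGen_reward {d : ℕ} {c : DBNMasks d} {t k : ℕ} (hk : 0 < k)
    {n : DBNNode d} (hnt : nodeTime n = t)
    (h : Relation.TransGen (DBNEdge c) n (.reward (t + k))) :
    n ∈ MinSet c t ∪ {DBNNode.action t} := by
  cases n with
  | latent j s =>
    have : s = t := hnt
    subst this
    exact Or.inl ⟨j, rfl, latent_mem_minset hk h⟩
  | action s =>
    have : s = t := hnt
    subst this
    exact Or.inr rfl
  | reward s => exact (no_transGen_from_reward h).elim

lemma fwd_transGen {V : Type*} (E : V → V → Prop) (g : ℕ → V) :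
    ∀ a b : ℕ, a < b → (∀ j, a ≤ j → j < b → E (g j) (g (j + 1))) →
      Relation.TransGen E (g a) (g b) := by
  intro a b
  induction b with
  | zero => intro hab; exact absurd hab (Nat.not_lt_zero a)
  | succ b ih =>
    intro hab hf
    rcases Nat.lt_or_ge a b with h | h
    · exact (ih h (fun j h1 h2 => hf j h1 (by omega))).tail (hf b (by omega) (by omega))
    · have hab' : a = b := by omega
      subst hab'
      exact .single (hf a le_rfl (by omega))

lemma fwd_time {V : Type*} (E : V → V → Prop) (time : V → ℕ)
    (hE : ∀ x y, E x y → time y = time x + 1) (g : ℕ → V) :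
    ∀ a b : ℕ, a ≤ b → (∀ j, a ≤ j → j < b → E (g j) (g (j + 1))) →
      time (g b) = time (g a) + (b - a) := by
  intro a b
  induction b with
  | zero => intro h _; have : a = 0 := Nat.le_zero.mp h; subst this; simp
  | succ b ih =>
    intro hab hf
    by_cases hab' : a = b + 1
    · subst hab'; simp
    · have h1 := ih (by omega) (fun j hj1 hj2 => hf j hj1 (by omega))
      have h2 := hE _ _ (hf b (by omega) (by omega))
      omega

lemma triple_infix {V : Type*} (p : List V) (x : V) (a : ℕ) (h : a + 2 < p.length) :
    [p.getD a x, p.getD (a + 1) x, p.getD (a + 2) x] <:+: p := by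
  refine ⟨p.take a, p.drop (a + 3), ?_⟩
  have h0 : a < p.length := by omega
  have h1 : a + 1 < p.length := by omega
  rw [List.getD_eq_getElem p x h0, List.getD_eq_getElem p x h1, List.getD_eq_getElem p x h]
  have e1 := List.drop_eq_getElem_cons (l := p) h0
  have e2 := List.drop_eq_getElem_cons (l := p) h1
  have e3 := List.drop_eq_getElem_cons (l := p) h
  have key : p.drop a = p[a] :: p[a + 1] :: p[a + 2] :: p.drop (a + 3) := by
    rw [e1, show a + 1 + 1 = a + 2 from rfl] at *
    rw [e2, e3, show a + 2 + 1 = a + 3 from rfl]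
  calc p.take a ++ [p[a], p[a + 1], p[a + 2]] ++ p.drop (a + 3)
      = p.take a ++ p.drop a := by rw [key]; simp
    _ = p := List.take_append_drop a p

lemma triple_infix' {V : Type*} (p : List V) (x : V) (g : ℕ → V)
    (hg : ∀ j, g j = p.getD j x) (a b c' : ℕ) (hb : b = a + 1) (hc : c' = a + 2)
    (h : a + 2 < p.length) : [g a, g b, g c'] <:+: p := by
  subst hb hc
  rw [hg, hg, hg]
  exact triple_infix p x a h

end DSepAux

open DSepAux in
/-- If the latent component `g_{i,t}` has no directed path in `G` to any future
reward node `r_{t+k}` (`k > 0`), then `g_t^min ∪ {a_t}` d-separates `g_{i,t}`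
from every future reward node `r_{t+k}` in `G`. -/
theorem dsep_of_no_directed_path_to_future_reward (d : ℕ) (c : DBNMasks d)
    (i : Fin d) (t : ℕ)
    (hNoPath : ∀ k : ℕ, 0 < k →
      ¬ Relation.TransGen (DBNEdge c) (DBNNode.latent i t) (DBNNode.reward (t + k))) :
    ∀ k : ℕ, 0 < k →
      DSep (DBNEdge c) {DBNNode.latent i t} {DBNNode.reward (t + k)}
        (MinSet c t ∪ {DBNNode.action t}) := by
  classical
  intro k hk x hx y hy p hp hhead hlast
  obtain ⟨hchain, -⟩ := hp
  rw [Set.mem_singleton_iff] at hx hy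
  subst hx hy
  set L := p.length with hL
  have hne : p ≠ [] := by rintro rfl; simp at hhead
  have hLpos : 0 < L := List.length_pos_iff.mpr hne
  set g : ℕ → DBNNode d := fun j => p.getD j (DBNNode.reward 0) with hg
  have hgdef : ∀ j, g j = p.getD j (DBNNode.reward 0) := fun j => rfl
  have hg0 : g 0 = DBNNode.latent i t := by
    have h1 : p[0]? = some (DBNNode.latent i t) := by
      rw [← List.head?_eq_getElem?]; exact hhead
    rw [List.getElem?_eq_getElem hLpos] at h1
    rw [hgdef 0, List.getD_eq_getElem p _ hLpos]
    exact Option.some.inj h1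
  have hgL : g (L - 1) = DBNNode.reward (t + k) := by
    have hlt : L - 1 < p.length := by omega
    have h1 : p[L - 1]? = some (DBNNode.reward (t + k)) := by
      rw [← List.getLast?_eq_getElem?]; exact hlast
    rw [List.getElem?_eq_getElem hlt] at h1
    rw [hgdef (L - 1), List.getD_eq_getElem p _ hlt]
    exact Option.some.inj h1
  have hadj : ∀ j, j + 1 < L → Adj (DBNEdge c) (g j) (g (j + 1)) := by
    intro j hj
    have h1 := List.isChain_iff_getElem.mp hchain j (by omega)
    rw [hgdef j, hgdef (j + 1), List.getD_eq_getElem p _ (show j < p.length by omega),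
      List.getD_eq_getElem p _ (show j + 1 < p.length by omega)]
    simpa [List.get_eq_getElem] using h1
  have hadjT : ∀ j, j + 1 < L →
      nodeTime (g (j + 1)) = nodeTime (g j) + 1 ∨
        nodeTime (g j) = nodeTime (g (j + 1)) + 1 := by
    intro j hj
    rcases hadj j hj with h | h
    · exact Or.inl (edge_time h)
    · exact Or.inr (edge_time h)
  by_cases hall : ∀ j, j + 1 < L → DBNEdge c (g j) (g (j + 1))
  · exfalso
    have hL2 : 1 < L := by
      by_contra h
      have hh : L - 1 = 0 := by omega
      rw [hh, hg0] at hgL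
      cases hgL
    have htg := fwd_transGen (DBNEdge c) g 0 (L - 1) (by omega)
      (fun j _ h2 => hall j (by omega))
    rw [hg0, hgL] at htg
    exact hNoPath k hk htg
  · push_neg at hall
    obtain ⟨j0, hj0L, hj0⟩ := hall
    have hj0b : DBNEdge c (g (j0 + 1)) (g j0) := (hadj j0 hj0L).resolve_left hj0
    set P : ℕ → Prop := fun j => j + 1 < L ∧ DBNEdge c (g (j + 1)) (g j) with hP
    have hPm : P (Nat.findGreatest P (L - 1)) :=
      Nat.findGreatest_spec (m := j0) (by omega) ⟨hj0L, hj0b⟩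
    set m := Nat.findGreatest P (L - 1) with hm
    obtain ⟨hmL, hmB⟩ := hPm
    have hmax : ∀ j, m < j → j + 1 < L → DBNEdge c (g j) (g (j + 1)) := by
      intro j hmj hjL
      have hnP : ¬ P j := Nat.findGreatest_is_greatest (n := L - 1) (by omega) (by omega)
      have hnb : ¬ DBNEdge c (g (j + 1)) (g j) := fun h => hnP ⟨hjL, h⟩
      exact (hadj j hjL).resolve_right hnb
    have hm1 : m + 1 < L - 1 := by
      by_contra h
      have hh : m + 1 = L - 1 := by omega
      rw [hh, hgL] at hmB
      exact reward_no_edge hmB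
    have hsufT : ∀ b, m + 1 ≤ b → b ≤ L - 1 →
        nodeTime (g b) = nodeTime (g (m + 1)) + (b - (m + 1)) :=
      fun b h1 h2 => fwd_time _ nodeTime (fun x y h => edge_time h) g (m + 1) b h1
        (fun j hj1 hj2 => hmax j (by omega) (by omega))
    set s := nodeTime (g (m + 1)) with hs
    have hsT : s + (L - 1 - (m + 1)) = t + k := by
      have h1 := hsufT (L - 1) (by omega) le_rfl
      rw [hgL] at h1
      have h2 : nodeTime (DBNNode.reward (t + k) : DBNNode d) = t + k := rfl
      omega
    rcases Nat.lt_trichotomy s t with hst | hst | hst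
    · -- chain case
      set p0 := m + 1 + (t - s) with hp0
      have hp0lt : p0 < L - 1 := by omega
      have hp0T : nodeTime (g p0) = t := by
        have h1 := hsufT p0 (by omega) (by omega)
        omega
      have e1 : DBNEdge c (g (p0 - 1)) (g (p0 - 1 + 1)) := hmax (p0 - 1) (by omega) (by omega)
      rw [show p0 - 1 + 1 = p0 by omega] at e1
      have e2 : DBNEdge c (g p0) (g (p0 + 1)) := hmax p0 (by omega) (by omega)
      have htg : Relation.TransGen (DBNEdge c) (g p0) (DBNNode.reward (t + k)) := by
        have h1 := fwd_transGen (DBNEdge c) g p0 (L - 1) (by omega)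
          (fun j hj1 hj2 => hmax j (by omega) (by omega))
        rwa [hgL] at h1
      exact ⟨g (p0 - 1), g p0, g (p0 + 1),
        triple_infix' p _ g hgdef (p0 - 1) p0 (p0 + 1) (by omega) (by omega) (by omega),
        Or.inl ⟨Or.inl ⟨e1, e2⟩, mem_Z_of_transGen_reward hk hp0T htg⟩⟩
    · -- fork case
      have htg : Relation.TransGen (DBNEdge c) (g (m + 1)) (DBNNode.reward (t + k)) := by
        have h1 := fwd_transGen (DBNEdge c) g (m + 1) (L - 1) (by omega)
          (fun j hj1 hj2 => hmax j (by omega) (by omega))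
        rwa [hgL] at h1
      have e2 : DBNEdge c (g (m + 1)) (g (m + 2)) := by
        have := hmax (m + 1) (by omega) (by omega)
        rwa [show m + 1 + 1 = m + 2 from rfl] at this
      exact ⟨g m, g (m + 1), g (m + 2),
        triple_infix' p _ g hgdef m (m + 1) (m + 2) rfl rfl (by omega),
        Or.inl ⟨Or.inr (Or.inr ⟨hmB, e2⟩), mem_Z_of_transGen_reward hk hst htg⟩⟩
    · -- collider case
      set Q : ℕ → Prop := fun j => j ≤ m + 1 ∧ nodeTime (g j) = t with hQ
      have hQq : Q (Nat.findGreatest Q (m + 1)) :=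
        Nat.findGreatest_spec (m := 0) (Nat.zero_le _)
          ⟨Nat.zero_le _, by rw [hg0]; rfl⟩
      set q := Nat.findGreatest Q (m + 1) with hq
      have hqmax : ∀ j, q < j → j ≤ m + 1 → nodeTime (g j) ≠ t :=
        fun j h1 h2 hT => Nat.findGreatest_is_greatest h1 h2 ⟨h2, hT⟩
      have hqT : nodeTime (g q) = t := hQq.2
      have hqlt : q < m + 1 := by
        rcases Nat.lt_or_ge q (m + 1) with h | h
        · exact h
        · exfalso
          have hh : q = m + 1 := by omega
          rw [hh] at hqT
          omega
      have key : ∀ r, ∀ j, m + 1 - j = r → q < j → j ≤ m + 1 → t < nodeTime (g j) := by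
        intro r
        induction r with
        | zero =>
          intro j h1 h2 h3
          have hh : j = m + 1 := by omega
          rw [hh]; omega
        | succ r ih =>
          intro j h1 h2 h3
          have hj : j < m + 1 := by omega
          have h4 := ih (j + 1) (by omega) (by omega) (by omega)
          have h5 := hadjT j (by omega)
          have h6 := hqmax j h2 h3
          omega
      have hedgeq : DBNEdge c (g q) (g (q + 1)) := by
        have h1 : t < nodeTime (g (q + 1)) := key (m + 1 - (q + 1)) (q + 1) rfl (by omega) (by omega)
        rcases hadj q (by omega) with h | h
        · exact h
        · exfalso; have := edge_time h; omega
      have hqm : q < m := by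
        rcases Nat.lt_or_ge q m with h | h
        · exact h
        · exfalso
          have hh : q = m := by omega
          have hte := edge_time hmB
          rw [hh] at hqT
          omega
      have hex : ∃ j, q + 1 ≤ j ∧ j + 1 < L ∧ DBNEdge c (g (j + 1)) (g j) :=
        ⟨m, by omega, hmL, hmB⟩
      obtain ⟨hr1, hr2, hr3⟩ := Nat.find_spec hex
      set r := Nat.find hex with hr
      have hrm : r ≤ m := Nat.find_min' hex ⟨by omega, hmL, hmB⟩
      have hfwd_r : DBNEdge c (g (r - 1)) (g r) := by
        rcases Nat.lt_or_ge q (r - 1) with h | h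
        · have hnb := Nat.find_min hex (show r - 1 < r by omega)
          have hnb' : ¬ DBNEdge c (g (r - 1 + 1)) (g (r - 1)) := fun hb =>
            hnb ⟨by omega, by omega, hb⟩
          have hh := (hadj (r - 1) (by omega)).resolve_right hnb'
          rwa [show r - 1 + 1 = r by omega] at hh
        · have hh : r = q + 1 := by omega
          rw [hh, show q + 1 - 1 = q from rfl]
          exact hedgeq
      have hrT : t < nodeTime (g r) := key (m + 1 - r) r rfl (by omega) (by omega)
      refine ⟨g (r - 1), g r, g (r + 1),
        triple_infix' p _ g hgdef (r - 1) r (r + 1) (by omega) (by omega) (by omega),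
        Or.inr ⟨⟨hfwd_r, hr3⟩, ?_, ?_⟩⟩
      · intro hZ
        have := mem_Z_time hZ
        omega
      · intro w hw hZ
        have h1 := mem_Z_time hZ
        have h2 := transGen_time hw
        omega
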